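/- (Final pointwise estimate in proof of Theorem 1.1) Let n ≥ 3, R > 0 real, A an n×n symmetric trace-free matrix, and W a totally trace-free (0,4)-tensor with Weyl symmetries. If |W|² + (n/(2(n−2)))‖A‖² < R²/(2(n−1)(n−2)), then (R/(n−1))‖A‖² − 2Σ W_{ijkl}A_{ik}A_{jl} + (n/(n−2))·tr(A³) ≥ [R/(n−1) − 2√((n−2)/(2(n−1)))·(|W|² + (n/(2(n−2)))‖A‖²)^{1/2}]·‖A‖², and this quantity is nonnegative, equal to zero only if A = 0. -/

import Mathlib

open Finset

namespace Stmt15Aux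

variable {n : ℕ}

noncomputable def d (i j : Fin n) : ℝ := if i = j then 1 else 0
noncomputable def s2 (A : Fin n → Fin n → ℝ) : ℝ := ∑ i, ∑ j, (A i j)^2
noncomputable def Bm (A : Fin n → Fin n → ℝ) (k l : Fin n) : ℝ := ∑ i, A i k * A i l
noncomputable def B0 (A : Fin n → Fin n → ℝ) (k l : Fin n) : ℝ :=
  Bm A k l - (s2 A / n) * d k l

lemma dsymm (i j : Fin n) : d i j = d j i := by simp [d, eq_comm]
lemma dd (i : Fin n) : d i i = 1 := by simp [d]

lemma Bsymm (A : Fin n → Fin n → ℝ) (k l : Fin n) : Bm A k l = Bm A l k := by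
  simp [Bm, mul_comm]

lemma B0symm (A : Fin n → Fin n → ℝ) (k l : Fin n) : B0 A k l = B0 A l k := by
  simp [B0, Bsymm, dsymm]

lemma trB (A : Fin n → Fin n → ℝ) : ∑ k, Bm A k k = s2 A := by
  rw [s2, Finset.sum_comm]
  simp [Bm, sq]

lemma trB0 (A : Fin n → Fin n → ℝ) (hn : (n:ℝ) ≠ 0) : ∑ k, B0 A k k = 0 := by
  simp only [B0, Finset.sum_sub_distrib, trB, dd, mul_one, Finset.sum_const, card_univ,
    Fintype.card_fin, nsmul_eq_mul]
  field_simp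
  ring

noncomputable def Tt (A : Fin n → Fin n → ℝ) (i j k l : Fin n) : ℝ :=
  A i k * A j l - A i l * A j k
noncomputable def Kt (A : Fin n → Fin n → ℝ) (i j k l : Fin n) : ℝ :=
  B0 A i k * d j l + B0 A j l * d i k - B0 A i l * d j k - B0 A j k * d i l
noncomputable def Gt (i j k l : Fin n) : ℝ := d i k * d j l - d i l * d j k
noncomputable def Ut (A : Fin n → Fin n → ℝ) (i j k l : Fin n) : ℝ :=
  Tt A i j k l + (1/((n:ℝ)-2)) * Kt A i j k l + (s2 A/((n:ℝ)*((n:ℝ)-1))) * Gt i j k l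

variable (A : Fin n → Fin n → ℝ)

-- trace of T over slots 1,3
lemma trT (htr : ∑ i, A i i = 0) (hsym : ∀ i j, A i j = A j i) (j l : Fin n) :
    ∑ i, Tt A i j i l = - Bm A j l := by
  simp only [Tt, Finset.sum_sub_distrib]
  rw [show (∑ i, A i i * A j l) = (∑ i, A i i) * A j l from (Finset.sum_mul ..).symm, htr]
  rw [show (∑ i, A i l * A j i) = Bm A j l from ?_]
  · ring
  · simp only [Bm]
    exact Finset.sum_congr rfl fun i _ => by rw [hsym j i]; ring

lemma trK (hn : (n:ℝ) ≠ 0) (j l : Fin n) :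
    ∑ i, Kt A i j i l = ((n:ℝ) - 2) * B0 A j l := by
  simp only [Kt, Finset.sum_add_distrib, Finset.sum_sub_distrib]
  rw [show (∑ i, B0 A i i * d j l) = (∑ i, B0 A i i) * d j l from (Finset.sum_mul ..).symm,
    trB0 A hn]
  have h1 : (∑ _i : Fin n, B0 A j l * d _i _i) = (n:ℝ) * B0 A j l := by
    simp [dd, Finset.sum_const, card_univ, mul_comm]
  have h2 : (∑ i, B0 A i l * d j i) = B0 A j l := by
    simp [d, mul_ite, Finset.sum_ite_eq, mul_one, mul_zero]
  have h3 : (∑ i, B0 A j i * d i l) = B0 A j l := by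
    simp [d, mul_ite, Finset.sum_ite_eq', mul_one, mul_zero]
  rw [h1, h2, h3]; ring

lemma trG (j l : Fin n) : (∑ i, Gt i j i l) = ((n:ℝ) - 1) * d j l := by
  simp only [Gt, Finset.sum_sub_distrib]
  have h1 : (∑ _i : Fin n, d _i _i * d j l) = (n:ℝ) * d j l := by
    simp [dd, Finset.sum_const, card_univ]
  have h2 : (∑ i, d i l * d j i) = d j l := by
    by_cases h : j = l <;> simp [d, h, Finset.sum_ite_eq', eq_comm] <;>
      simp [Finset.sum_ite_eq, if_neg (fun hh => h hh.symm)]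
  rw [h1, h2]; ring

lemma tr13U (htr : ∑ i, A i i = 0) (hsym : ∀ i j, A i j = A j i)
    (hn0 : (n:ℝ) ≠ 0) (hn1 : (n:ℝ) - 1 ≠ 0) (hn2 : (n:ℝ) - 2 ≠ 0) (j l : Fin n) :
    ∑ i, Ut A i j i l = 0 := by
  simp only [Ut, Finset.sum_add_distrib, ← Finset.mul_sum]
  rw [trT A htr hsym, trK A hn0, trG]
  simp only [B0]
  field_simp
  ring

end Stmt15Aux

namespace Stmt15Aux
variable {n : ℕ} (A : Fin n → Fin n → ℝ)

lemma Usym1 (i j k l : Fin n) : Ut A i j k l = - Ut A j i k l := by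
  simp only [Ut, Tt, Kt, Gt]; ring

lemma Usym2 (i j k l : Fin n) : Ut A i j k l = - Ut A i j l k := by
  simp only [Ut, Tt, Kt, Gt]; ring

lemma Usym3 (hsym : ∀ i j, A i j = A j i) (i j k l : Fin n) : Ut A i j k l = Ut A k l i j := by
  simp only [Ut, Tt, Kt, Gt, dsymm k i, dsymm l j, dsymm k j, dsymm l i,
    B0symm A k i, B0symm A l j, B0symm A k j, B0symm A l i, hsym k i, hsym l j, hsym k j, hsym l i]
  ring

end Stmt15Aux

namespace Stmt15Aux
variable {n : ℕ} (A : Fin n → Fin n → ℝ)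

lemma tr24U (htr : ∑ i, A i i = 0) (hsym : ∀ i j, A i j = A j i)
    (hn0 : (n:ℝ) ≠ 0) (hn1 : (n:ℝ) - 1 ≠ 0) (hn2 : (n:ℝ) - 2 ≠ 0) (i k : Fin n) :
    ∑ j, Ut A i j k j = 0 := by
  have : ∀ j, Ut A i j k j = Ut A j i j k := fun j => by
    rw [Usym1, Usym2]; ring
  simp only [this]
  exact tr13U A htr hsym hn0 hn1 hn2 i k

lemma tr23U (htr : ∑ i, A i i = 0) (hsym : ∀ i j, A i j = A j i)
    (hn0 : (n:ℝ) ≠ 0) (hn1 : (n:ℝ) - 1 ≠ 0) (hn2 : (n:ℝ) - 2 ≠ 0) (i l : Fin n) :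
    ∑ j, Ut A i j j l = 0 := by
  have : ∀ j, Ut A i j j l = - Ut A j i j l := fun j => by rw [Usym1]
  simp only [this, Finset.sum_neg_distrib]
  rw [tr13U A htr hsym hn0 hn1 hn2 i l, neg_zero]

lemma tr14U (htr : ∑ i, A i i = 0) (hsym : ∀ i j, A i j = A j i)
    (hn0 : (n:ℝ) ≠ 0) (hn1 : (n:ℝ) - 1 ≠ 0) (hn2 : (n:ℝ) - 2 ≠ 0) (j k : Fin n) :
    ∑ i, Ut A i j k i = 0 := by
  have : ∀ i, Ut A i j k i = - Ut A i j i k := fun i => Usym2 A i j k i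
  simp only [this, Finset.sum_neg_distrib]
  rw [tr13U A htr hsym hn0 hn1 hn2 j k, neg_zero]

end Stmt15Aux

namespace Stmt15Aux
variable {n : ℕ} (A : Fin n → Fin n → ℝ)

lemma contract_r (f : Fin n → ℝ) (a : Fin n) : (∑ x, f x * d a x) = f a := by
  simp [d, mul_ite, mul_one, mul_zero, Finset.sum_ite_eq]

lemma sumVK (V : Fin n → Fin n → Fin n → Fin n → ℝ)
    (h13 : ∀ j l, ∑ i, V i j i l = 0) (h24 : ∀ i k, ∑ j, V i j k j = 0)
    (h23 : ∀ i l, ∑ j, V i j j l = 0) (h14 : ∀ j k, ∑ i, V i j k i = 0) :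
    (∑ i, ∑ j, ∑ k, ∑ l, V i j k l * Kt A i j k l) = 0 := by
  have point : ∀ i j k l, V i j k l * Kt A i j k l
      = (V i j k l * B0 A i k) * d j l + ((V i j k l * B0 A j l) * d i k
        - ((V i j k l * B0 A i l) * d j k) - (V i j k l * B0 A j k) * d i l) := fun i j k l => by
    simp only [Kt]; ring
  simp only [point, Finset.sum_add_distrib, Finset.sum_sub_distrib]
  have e1 : (∑ i, ∑ j, ∑ k, ∑ l, (V i j k l * B0 A i k) * d j l) = 0 := by
    refine Finset.sum_eq_zero fun i _ => ?_
    simp only [contract_r]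
    rw [Finset.sum_comm]
    refine Finset.sum_eq_zero fun k _ => ?_
    rw [← Finset.sum_mul, h24 i k, zero_mul]
  have e2 : (∑ i, ∑ j, ∑ k, ∑ l, (V i j k l * B0 A j l) * d i k) = 0 := by
    simp only [← Finset.sum_mul, contract_r]
    rw [Finset.sum_comm]
    refine Finset.sum_eq_zero fun j _ => ?_
    rw [Finset.sum_comm]
    refine Finset.sum_eq_zero fun l _ => ?_
    rw [← Finset.sum_mul, h13 j l, zero_mul]
  have e3 : (∑ i, ∑ j, ∑ k, ∑ l, (V i j k l * B0 A i l) * d j k) = 0 := by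
    simp only [← Finset.sum_mul, contract_r]
    refine Finset.sum_eq_zero fun i _ => ?_
    rw [Finset.sum_comm]
    refine Finset.sum_eq_zero fun l _ => ?_
    rw [← Finset.sum_mul, h23 i l, zero_mul]
  have e4 : (∑ i, ∑ j, ∑ k, ∑ l, (V i j k l * B0 A j k) * d i l) = 0 := by
    simp only [contract_r]
    rw [Finset.sum_comm]
    refine Finset.sum_eq_zero fun j _ => ?_
    rw [Finset.sum_comm]
    refine Finset.sum_eq_zero fun k _ => ?_
    rw [← Finset.sum_mul, h14 j k, zero_mul]
  rw [e1, e2, e3, e4]; ring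

lemma sumVG (V : Fin n → Fin n → Fin n → Fin n → ℝ)
    (h13 : ∀ j l, ∑ i, V i j i l = 0) (h23 : ∀ i l, ∑ j, V i j j l = 0) :
    (∑ i, ∑ j, ∑ k, ∑ l, V i j k l * Gt i j k l) = 0 := by
  have point : ∀ i j k l, V i j k l * Gt i j k l
      = (V i j k l * d i k) * d j l - (V i j k l * d j k) * d i l := fun i j k l => by
    simp only [Gt]; ring
  simp only [point, Finset.sum_sub_distrib]
  have e1 : (∑ i, ∑ j, ∑ k, ∑ l, (V i j k l * d i k) * d j l) = 0 := by
    simp only [← Finset.sum_mul, contract_r]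
    rw [Finset.sum_comm]
    refine Finset.sum_eq_zero fun j _ => ?_
    exact h13 j j
  have e2 : (∑ i, ∑ j, ∑ k, ∑ l, (V i j k l * d j k) * d i l) = 0 := by
    simp only [← Finset.sum_mul, contract_r]
    refine Finset.sum_eq_zero fun i _ => ?_
    exact h23 i i
  rw [e1, e2]; ring

end Stmt15Aux

namespace Stmt15Aux
variable {n : ℕ} (A : Fin n → Fin n → ℝ)

-- ⟨T,T⟩
lemma TT (hsym : ∀ i j, A i j = A j i) :
    (∑ i, ∑ j, ∑ k, ∑ l, (Tt A i j k l)^2)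
      = 2 * (s2 A)^2 - 2 * ∑ i, ∑ j, (Bm A i j)^2 := by
  have point : ∀ i j k l : Fin n, (Tt A i j k l)^2
      = (A i k)^2 * (A j l)^2 + ((A i l)^2 * (A j k)^2
        - 2 * ((A i k * A j k) * (A i l * A j l))) := fun i j k l => by
    simp only [Tt]; ring
  simp only [point, Finset.sum_add_distrib, Finset.sum_sub_distrib]
  have e1 : (∑ i, ∑ j, ∑ k, ∑ l, (A i k)^2 * (A j l)^2) = (s2 A)^2 := by
    simp only [← Finset.mul_sum, ← Finset.sum_mul, s2]
    ring
  have e2 : (∑ i, ∑ j, ∑ k, ∑ l, (A i l)^2 * (A j k)^2) = (s2 A)^2 := by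
    simp only [← Finset.mul_sum, ← Finset.sum_mul, s2]
    ring
  have e3 : (∑ i, ∑ j, ∑ k, ∑ l, 2 * ((A i k * A j k) * (A i l * A j l)))
      = 2 * ∑ i, ∑ j, (Bm A i j)^2 := by
    simp only [← Finset.mul_sum, ← Finset.sum_mul]
    congr 1
    refine Finset.sum_congr rfl fun i _ => Finset.sum_congr rfl fun j _ => ?_
    have hb : (∑ k, A i k * A j k) = Bm A i j :=
      Finset.sum_congr rfl fun k _ => by rw [hsym i k, hsym j k]
    rw [hb, ← sq]
  rw [e1, e2, e3]; ring

end Stmt15Aux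

namespace Stmt15Aux
variable {n : ℕ} (A : Fin n → Fin n → ℝ)

lemma tr24T (htr : ∑ i, A i i = 0) (hsym : ∀ i j, A i j = A j i) (i k : Fin n) :
    ∑ j, Tt A i j k j = - Bm A i k := by
  have : ∀ j, Tt A i j k j = Tt A j i j k := fun j => by simp only [Tt]; ring
  simp only [this]
  exact trT A htr hsym i k

lemma tr23T (htr : ∑ i, A i i = 0) (hsym : ∀ i j, A i j = A j i) (i l : Fin n) :
    ∑ j, Tt A i j j l = Bm A i l := by
  simp only [Tt, Finset.sum_sub_distrib]
  rw [show (∑ j, A i l * A j j) = A i l * ∑ j, A j j from (Finset.mul_sum ..).symm, htr, mul_zero]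
  rw [show (∑ j, A i j * A j l) = Bm A i l from
    Finset.sum_congr rfl fun j _ => by rw [hsym i j]]
  ring

lemma tr14T (htr : ∑ i, A i i = 0) (hsym : ∀ i j, A i j = A j i) (j k : Fin n) :
    ∑ i, Tt A i j k i = Bm A k j := by
  simp only [Tt, Finset.sum_sub_distrib]
  rw [show (∑ i, A i i * A j k) = (∑ i, A i i) * A j k from (Finset.sum_mul ..).symm, htr,
    zero_mul]
  rw [show (∑ i, A i k * A j i) = Bm A k j from
    Finset.sum_congr rfl fun i _ => by rw [hsym j i]]
  ring

lemma SBB (hn0 : (n:ℝ) ≠ 0) :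
    (∑ i, ∑ j, Bm A i j * B0 A i j) = ∑ i, ∑ j, (B0 A i j)^2 := by
  have point : ∀ i j, Bm A i j * B0 A i j = (B0 A i j)^2 + (s2 A/n) * (B0 A i j * d i j) :=
    fun i j => by simp only [B0]; ring
  simp only [point, Finset.sum_add_distrib, ← Finset.mul_sum, contract_r]
  rw [trB0 A hn0, mul_zero, add_zero]

lemma TK (htr : ∑ i, A i i = 0) (hsym : ∀ i j, A i j = A j i) (hn0 : (n:ℝ) ≠ 0) :
    (∑ i, ∑ j, ∑ k, ∑ l, Tt A i j k l * Kt A i j k l)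
      = -4 * ∑ i, ∑ j, (B0 A i j)^2 := by
  have point : ∀ i j k l, Tt A i j k l * Kt A i j k l
      = (Tt A i j k l * B0 A i k) * d j l + ((Tt A i j k l * B0 A j l) * d i k
        - ((Tt A i j k l * B0 A i l) * d j k) - (Tt A i j k l * B0 A j k) * d i l) :=
    fun i j k l => by simp only [Kt]; ring
  simp only [point, Finset.sum_add_distrib, Finset.sum_sub_distrib]
  have e1 : (∑ i, ∑ j, ∑ k, ∑ l, (Tt A i j k l * B0 A i k) * d j l)
      = - ∑ i, ∑ j, Bm A i j * B0 A i j := by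
    simp only [contract_r]
    rw [← Finset.sum_neg_distrib]
    refine Finset.sum_congr rfl fun i _ => ?_
    rw [Finset.sum_comm, ← Finset.sum_neg_distrib]
    refine Finset.sum_congr rfl fun k _ => ?_
    rw [← Finset.sum_mul, tr24T A htr hsym i k]; ring
  have e2 : (∑ i, ∑ j, ∑ k, ∑ l, (Tt A i j k l * B0 A j l) * d i k)
      = - ∑ i, ∑ j, Bm A i j * B0 A i j := by
    simp only [← Finset.sum_mul, contract_r]
    rw [Finset.sum_comm, ← Finset.sum_neg_distrib]
    refine Finset.sum_congr rfl fun j _ => ?_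
    rw [Finset.sum_comm, ← Finset.sum_neg_distrib]
    refine Finset.sum_congr rfl fun l _ => ?_
    rw [← Finset.sum_mul, trT A htr hsym j l]; ring
  have e3 : (∑ i, ∑ j, ∑ k, ∑ l, (Tt A i j k l * B0 A i l) * d j k)
      = ∑ i, ∑ j, Bm A i j * B0 A i j := by
    simp only [← Finset.sum_mul, contract_r]
    refine Finset.sum_congr rfl fun i _ => ?_
    rw [Finset.sum_comm]
    refine Finset.sum_congr rfl fun l _ => ?_
    rw [← Finset.sum_mul, tr23T A htr hsym i l]
  have e4 : (∑ i, ∑ j, ∑ k, ∑ l, (Tt A i j k l * B0 A j k) * d i l)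
      = ∑ i, ∑ j, Bm A i j * B0 A i j := by
    simp only [contract_r]
    rw [Finset.sum_comm]
    refine Finset.sum_congr rfl fun j _ => ?_
    rw [Finset.sum_comm]
    refine Finset.sum_congr rfl fun k _ => ?_
    rw [← Finset.sum_mul, tr14T A htr hsym j k, Bsymm]
  rw [e1, e2, e3, e4, SBB A hn0]; ring

lemma TG (htr : ∑ i, A i i = 0) (hsym : ∀ i j, A i j = A j i) :
    (∑ i, ∑ j, ∑ k, ∑ l, Tt A i j k l * Gt i j k l) = -2 * s2 A := by
  have point : ∀ i j k l, Tt A i j k l * Gt i j k l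
      = (Tt A i j k l * d i k) * d j l - (Tt A i j k l * d j k) * d i l := fun i j k l => by
    simp only [Gt]; ring
  simp only [point, Finset.sum_sub_distrib, contract_r]
  have e1 : (∑ i, ∑ j, Tt A i j i j) = - s2 A := by
    have p2 : ∀ i j : Fin n, Tt A i j i j = A i i * A j j - (A i j)^2 := fun i j => by
      simp only [Tt]; rw [hsym j i]; ring
    simp only [p2, Finset.sum_sub_distrib, ← Finset.mul_sum, htr, mul_zero,
      Finset.sum_const_zero, s2]
    ring
  have e2 : (∑ i, ∑ j, Tt A i j j i) = s2 A := by
    have p2 : ∀ i j : Fin n, Tt A i j j i = (A i j)^2 - A i i * A j j := fun i j => by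
      simp only [Tt]; rw [hsym j i]; ring
    simp only [p2, Finset.sum_sub_distrib, ← Finset.mul_sum, htr, mul_zero,
      Finset.sum_const_zero, s2]
    ring
  rw [e1, e2]; ring

end Stmt15Aux

namespace Stmt15Aux
variable {n : ℕ} (A : Fin n → Fin n → ℝ)

lemma BB (hn0 : (n:ℝ) ≠ 0) :
    (∑ i, ∑ j, (Bm A i j)^2) = (∑ i, ∑ j, (B0 A i j)^2) + (s2 A)^2/n := by
  have point : ∀ i j, (Bm A i j)^2 = (B0 A i j)^2 + (2*(s2 A)/n) * (B0 A i j * d i j)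
      + (s2 A/n)^2 * (d i j * d i j) := fun i j => by
    simp only [B0, d]; split_ifs <;> ring
  simp only [point, Finset.sum_add_distrib, ← Finset.mul_sum, contract_r]
  rw [trB0 A hn0]
  simp only [dd, Finset.sum_const, card_univ, Fintype.card_fin, nsmul_eq_mul, mul_one]
  field_simp
  ring

lemma UU (htr : ∑ i, A i i = 0) (hsym : ∀ i j, A i j = A j i)
    (hn0 : (n:ℝ) ≠ 0) (hn1 : (n:ℝ) - 1 ≠ 0) (hn2 : (n:ℝ) - 2 ≠ 0) :
    (∑ i, ∑ j, ∑ k, ∑ l, (Ut A i j k l)^2)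
      = 2*(((n:ℝ)-2)/((n:ℝ)-1)) * (s2 A)^2
        - 2*(n:ℝ)/((n:ℝ)-2) * ∑ i, ∑ j, (B0 A i j)^2 := by
  have pu : ∀ i j k l, (Ut A i j k l)^2
      = Ut A i j k l * Tt A i j k l + (1/((n:ℝ)-2)) * (Ut A i j k l * Kt A i j k l)
        + (s2 A/((n:ℝ)*((n:ℝ)-1))) * (Ut A i j k l * Gt i j k l) := fun i j k l => by
    simp only [Ut]; ring
  have put : ∀ i j k l, Ut A i j k l * Tt A i j k l
      = (Tt A i j k l)^2 + (1/((n:ℝ)-2)) * (Tt A i j k l * Kt A i j k l)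
        + (s2 A/((n:ℝ)*((n:ℝ)-1))) * (Tt A i j k l * Gt i j k l) := fun i j k l => by
    simp only [Ut]; ring
  simp only [pu, put, Finset.sum_add_distrib, ← Finset.mul_sum]
  rw [sumVK A (Ut A) (tr13U A htr hsym hn0 hn1 hn2) (tr24U A htr hsym hn0 hn1 hn2)
      (tr23U A htr hsym hn0 hn1 hn2) (tr14U A htr hsym hn0 hn1 hn2),
    sumVG (Ut A) (tr13U A htr hsym hn0 hn1 hn2) (tr23U A htr hsym hn0 hn1 hn2),
    TT A hsym, TK A htr hsym hn0, TG A htr hsym, BB A hn0]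
  field_simp
  ring

end Stmt15Aux

namespace Stmt15Aux
variable {n : ℕ} (A : Fin n → Fin n → ℝ) (W : Fin n → Fin n → Fin n → Fin n → ℝ)

section Wpart
variable (hW1 : ∀ i j k l, W i j k l = - W j i k l)
    (hW2 : ∀ i j k l, W i j k l = - W i j l k)
    (hW3 : ∀ i j k l, W i j k l = W k l i j)
    (hTrW : ∀ j l, ∑ i, W i j i l = 0)

include hW1 hW2 hW3 hTrW in
lemma w24 (i k : Fin n) : ∑ j, W i j k j = 0 := by
  have p : ∀ j, W i j k j = W j k j i := fun j => by
    calc W i j k j = W k j i j := hW3 ..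
      _ = -W j k i j := hW1 ..
      _ = -(-W j k j i) := by rw [hW2 j k i j]
      _ = W j k j i := by ring
  simp only [p]
  exact hTrW k i

include hW1 hTrW in
lemma w23 (i l : Fin n) : ∑ j, W i j j l = 0 := by
  simp only [fun j => hW1 i j j l, Finset.sum_neg_distrib, hTrW i l, neg_zero]

include hW2 hTrW in
lemma w14 (j k : Fin n) : ∑ i, W i j k i = 0 := by
  simp only [fun i => hW2 i j k i, Finset.sum_neg_distrib, hTrW j k, neg_zero]

include hW2 in
lemma WT : (∑ i, ∑ j, ∑ k, ∑ l, W i j k l * Tt A i j k l)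
    = 2 * ∑ i, ∑ j, ∑ k, ∑ l, W i j k l * A i k * A j l := by
  have point : ∀ i j k l, W i j k l * Tt A i j k l
      = W i j k l * A i k * A j l - W i j k l * A i l * A j k := fun i j k l => by
    simp only [Tt]; ring
  simp only [point, Finset.sum_sub_distrib]
  have e2 : (∑ i, ∑ j, ∑ k, ∑ l, W i j k l * A i l * A j k)
      = - ∑ i, ∑ j, ∑ k, ∑ l, W i j k l * A i k * A j l := by
    rw [← Finset.sum_neg_distrib]
    refine Finset.sum_congr rfl fun i _ => ?_
    rw [← Finset.sum_neg_distrib]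
    refine Finset.sum_congr rfl fun j _ => ?_
    rw [Finset.sum_comm, ← Finset.sum_neg_distrib]
    refine Finset.sum_congr rfl fun x _ => ?_
    rw [← Finset.sum_neg_distrib]
    refine Finset.sum_congr rfl fun y _ => ?_
    rw [hW2 i j y x]; ring
  rw [e2]; ring

include hW1 hW2 hW3 hTrW in
lemma WU : (∑ i, ∑ j, ∑ k, ∑ l, W i j k l * Ut A i j k l)
    = 2 * ∑ i, ∑ j, ∑ k, ∑ l, W i j k l * A i k * A j l := by
  have point : ∀ i j k l, W i j k l * Ut A i j k l
      = W i j k l * Tt A i j k l + (1/((n:ℝ)-2)) * (W i j k l * Kt A i j k l)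
        + (s2 A/((n:ℝ)*((n:ℝ)-1))) * (W i j k l * Gt i j k l) := fun i j k l => by
    simp only [Ut]; ring
  simp only [point, Finset.sum_add_distrib, ← Finset.mul_sum]
  rw [sumVK A W hTrW (w24 W hW1 hW2 hW3 hTrW) (w23 W hW1 hTrW) (w14 W hW2 hTrW),
    sumVG W hTrW (w23 W hW1 hTrW), WT A W hW2]
  ring

end Wpart
end Stmt15Aux

namespace Stmt15Aux
variable {n : ℕ} (A : Fin n → Fin n → ℝ) (W : Fin n → Fin n → Fin n → Fin n → ℝ)

lemma AB0 (htr : ∑ i, A i i = 0) (hsym : ∀ i j, A i j = A j i) :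
    (∑ i, ∑ k, A i k * B0 A i k) = ∑ i, ∑ j, ∑ k, A i j * A j k * A k i := by
  have point : ∀ i k, A i k * B0 A i k
      = A i k * Bm A i k - (s2 A/n) * (A i k * d i k) := fun i k => by
    simp only [B0]; ring
  simp only [point, Finset.sum_sub_distrib, ← Finset.mul_sum, contract_r]
  rw [htr, mul_zero, sub_zero]
  refine Finset.sum_congr rfl fun i _ => ?_
  simp only [Bm, Finset.mul_sum]
  refine Finset.sum_congr rfl fun x _ => Finset.sum_congr rfl fun y _ => ?_
  rw [hsym y x]
  ring

lemma CS4 (F G : Fin n → Fin n → Fin n → Fin n → ℝ) :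
    (∑ i, ∑ j, ∑ k, ∑ l, F i j k l * G i j k l)^2
      ≤ (∑ i, ∑ j, ∑ k, ∑ l, (F i j k l)^2) * (∑ i, ∑ j, ∑ k, ∑ l, (G i j k l)^2) := by
  have h := Finset.sum_mul_sq_le_sq_mul_sq Finset.univ
    (fun x : Fin n × Fin n × Fin n × Fin n => F x.1 x.2.1 x.2.2.1 x.2.2.2)
    (fun x => G x.1 x.2.1 x.2.2.1 x.2.2.2)
  simpa only [Fintype.sum_prod_type] using h

lemma CS2 (F G : Fin n → Fin n → ℝ) :
    (∑ i, ∑ j, F i j * G i j)^2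
      ≤ (∑ i, ∑ j, (F i j)^2) * (∑ i, ∑ j, (G i j)^2) := by
  have h := Finset.sum_mul_sq_le_sq_mul_sq Finset.univ
    (fun x : Fin n × Fin n => F x.1 x.2) (fun x => G x.1 x.2)
  simpa only [Fintype.sum_prod_type] using h

lemma comb (p q a b c e : ℝ) (ha : 0 ≤ a) (hb : 0 ≤ b) (hc : 0 ≤ c) (he : 0 ≤ e)
    (h1 : p^2 ≤ a*c) (h2 : q^2 ≤ b*e) : (p+q)^2 ≤ (a+b)*(c+e) := by
  have h3 : (p*q)^2 ≤ (a*c)*(b*e) := by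
    rw [mul_pow]
    exact mul_le_mul h1 h2 (sq_nonneg q) (mul_nonneg ha hc)
  have h4 : 2*(p*q) ≤ a*e + b*c := by
    nlinarith [h3, sq_nonneg (a*e - b*c), mul_nonneg ha he, mul_nonneg hb hc,
      mul_nonneg (mul_nonneg ha he) (mul_nonneg hb hc)]
  nlinarith [h1, h2, h4]

end Stmt15Aux

namespace Stmt15Aux
variable {n : ℕ}

lemma key (A : Fin n → Fin n → ℝ) (W : Fin n → Fin n → Fin n → Fin n → ℝ)
    (hn : (3:ℝ) ≤ (n:ℝ)) (htr : ∑ i, A i i = 0) (hsym : ∀ i j, A i j = A j i)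
    (hW1 : ∀ i j k l, W i j k l = - W j i k l)
    (hW2 : ∀ i j k l, W i j k l = - W i j l k)
    (hW3 : ∀ i j k l, W i j k l = W k l i j)
    (hTrW : ∀ j l, ∑ i, W i j i l = 0) :
    (-(∑ i, ∑ j, ∑ k, ∑ l, W i j k l * A i k * A j l)
      + ((n:ℝ)/(2*((n:ℝ)-2))) * (∑ i, ∑ j, ∑ k, A i j * A j k * A k i))^2
    ≤ (((n:ℝ)-2)/(2*((n:ℝ)-1))) * (s2 A)^2 *
      ((∑ i, ∑ j, ∑ k, ∑ l, (W i j k l)^2) + ((n:ℝ)/(2*((n:ℝ)-2))) * s2 A) := by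
  have hn0 : (n:ℝ) ≠ 0 := by linarith
  have hn1p : (0:ℝ) < (n:ℝ) - 1 := by linarith
  have hn2p : (0:ℝ) < (n:ℝ) - 2 := by linarith
  have hn1 : (n:ℝ) - 1 ≠ 0 := ne_of_gt hn1p
  have hn2 : (n:ℝ) - 2 ≠ 0 := ne_of_gt hn2p
  set a : ℝ := ∑ i, ∑ j, ∑ k, ∑ l, (W i j k l)^2 with ha_def
  set c : ℝ := (∑ i, ∑ j, ∑ k, ∑ l, (Ut A i j k l)^2)/4 with hc_def
  set b : ℝ := ((n:ℝ)/(2*((n:ℝ)-2))) * s2 A with hb_def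
  set e : ℝ := ((n:ℝ)/(2*((n:ℝ)-2))) * (∑ i, ∑ j, (B0 A i j)^2) with he_def
  set p : ℝ := -(1/2) * (∑ i, ∑ j, ∑ k, ∑ l, W i j k l * Ut A i j k l) with hp_def
  set q : ℝ := ((n:ℝ)/(2*((n:ℝ)-2))) * (∑ i, ∑ k, A i k * B0 A i k) with hq_def
  have hs2 : 0 ≤ s2 A := by
    apply Finset.sum_nonneg; intro i _; apply Finset.sum_nonneg; intro j _; positivity
  have hB02 : 0 ≤ ∑ i, ∑ j, (B0 A i j)^2 := by
    apply Finset.sum_nonneg; intro i _; apply Finset.sum_nonneg; intro j _; positivity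
  have ha : 0 ≤ a := by
    apply Finset.sum_nonneg; intro i _; apply Finset.sum_nonneg; intro j _
    apply Finset.sum_nonneg; intro k _; apply Finset.sum_nonneg; intro l _; positivity
  have hc : 0 ≤ c := by
    rw [hc_def]
    have : 0 ≤ ∑ i, ∑ j, ∑ k, ∑ l, (Ut A i j k l)^2 := by
      apply Finset.sum_nonneg; intro i _; apply Finset.sum_nonneg; intro j _
      apply Finset.sum_nonneg; intro k _; apply Finset.sum_nonneg; intro l _; positivity
    linarith
  have hnn : (0:ℝ) ≤ (n:ℝ)/(2*((n:ℝ)-2)) := by positivity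
  have hb : 0 ≤ b := mul_nonneg hnn hs2
  have he : 0 ≤ e := mul_nonneg hnn hB02
  -- p bound
  have hpc : p^2 ≤ a * c := by
    have h := CS4 W (Ut A)
    rw [hp_def, hc_def]
    nlinarith [h]
  have hqc : q^2 ≤ b * e := by
    have h := CS2 A (B0 A)
    have hs2' : (∑ i, ∑ j, (A i j)^2) = s2 A := rfl
    rw [hq_def, hb_def, he_def, mul_pow]
    rw [hs2'] at h
    calc ((n:ℝ)/(2*((n:ℝ)-2)))^2 * (∑ i, ∑ k, A i k * B0 A i k)^2
        ≤ ((n:ℝ)/(2*((n:ℝ)-2)))^2 * (s2 A * ∑ i, ∑ j, (B0 A i j)^2) :=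
          mul_le_mul_of_nonneg_left h (sq_nonneg _)
      _ = ((n:ℝ)/(2*((n:ℝ)-2)) * s2 A) * ((n:ℝ)/(2*((n:ℝ)-2)) * ∑ i, ∑ j, (B0 A i j)^2) := by
          ring
  -- the exact norm identity
  have hce : c + e = (((n:ℝ)-2)/(2*((n:ℝ)-1))) * (s2 A)^2 := by
    rw [hc_def, he_def, UU A htr hsym hn0 hn1 hn2]
    field_simp
    ring
  -- LHS = p + q
  have hL : (-(∑ i, ∑ j, ∑ k, ∑ l, W i j k l * A i k * A j l)
      + ((n:ℝ)/(2*((n:ℝ)-2))) * (∑ i, ∑ j, ∑ k, A i j * A j k * A k i)) = p + q := by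
    rw [hp_def, hq_def, WU A W hW1 hW2 hW3 hTrW, AB0 A htr hsym]
    ring
  rw [hL]
  calc (p + q)^2 ≤ (a + b) * (c + e) := comb p q a b c e ha hb hc he hpc hqc
    _ = (((n:ℝ)-2)/(2*((n:ℝ)-1))) * (s2 A)^2 * (a + b) := by rw [hce]; ring

end Stmt15Aux

namespace Stmt15Aux

lemma assemble (Rn k S L s : ℝ) (hRn : 0 < Rn) (hk : 0 ≤ k) (hS : 0 ≤ S) (hs : 0 ≤ s)
    (hkey : L^2 ≤ k * s^2 * S) (hstrict : 4 * (k * S) < Rn^2) :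
    (Rn * s + 2 * L ≥ (Rn - 2 * Real.sqrt k * Real.sqrt S) * s)
    ∧ 0 ≤ Rn * s + 2 * L ∧ (Rn * s + 2 * L = 0 → s = 0) := by
  have hM2 : (Real.sqrt k * Real.sqrt S * s)^2 = k * s^2 * S := by
    rw [mul_pow, mul_pow, Real.sq_sqrt hk, Real.sq_sqrt hS]; ring
  have hMnn : 0 ≤ Real.sqrt k * Real.sqrt S * s := by positivity
  have hLM : -(Real.sqrt k * Real.sqrt S * s) ≤ L := by
    nlinarith [sq_nonneg (L + Real.sqrt k * Real.sqrt S * s), hkey, hM2, hMnn]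
  have hx2 : (2 * Real.sqrt k * Real.sqrt S)^2 = 4 * (k * S) := by
    rw [mul_pow, mul_pow, Real.sq_sqrt hk, Real.sq_sqrt hS]; ring
  have hxnn : 0 ≤ 2 * Real.sqrt k * Real.sqrt S := by positivity
  have hx : 2 * Real.sqrt k * Real.sqrt S < Rn := by nlinarith [hx2, hxnn, hRn, hstrict]
  have g1 : Rn * s + 2 * L ≥ (Rn - 2 * Real.sqrt k * Real.sqrt S) * s := by nlinarith [hLM]
  have g2 : 0 ≤ Rn * s + 2 * L := by
    have h0 : 0 ≤ (Rn - 2 * Real.sqrt k * Real.sqrt S) * s := mul_nonneg (by linarith) hs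
    linarith
  refine ⟨g1, g2, fun h0 => ?_⟩
  by_contra hne
  have hspos : 0 < s := lt_of_le_of_ne hs (Ne.symm hne)
  have : 0 < (Rn - 2 * Real.sqrt k * Real.sqrt S) * s := mul_pos (by linarith) hspos
  linarith

end Stmt15Aux

open Stmt15Aux

theorem stmt_15 (n : ℕ) (hn : 3 ≤ n) (R : ℝ) (hR : 0 < R)
    (A : Fin n → Fin n → ℝ)
    (hsym : ∀ i j, A i j = A j i) (htr : ∑ i, A i i = 0)
    (W : Fin n → Fin n → Fin n → Fin n → ℝ)
    (hW1 : ∀ i j k l, W i j k l = - W j i k l)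
    (hW2 : ∀ i j k l, W i j k l = - W i j l k)
    (hW3 : ∀ i j k l, W i j k l = W k l i j)
    (hB : ∀ i j k l, W i j k l + W i k l j + W i l j k = 0)
    (hTrW : ∀ j l, ∑ i, W i j i l = 0)
    (hpinch : (∑ i, ∑ j, ∑ k, ∑ l, (W i j k l) ^ 2)
        + ((n : ℝ) / (2 * ((n : ℝ) - 2))) * (∑ i, ∑ j, (A i j) ^ 2)
        < R ^ 2 / (2 * ((n : ℝ) - 1) * ((n : ℝ) - 2))) :
    let nA2 : ℝ := ∑ i, ∑ j, (A i j) ^ 2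
    let E : ℝ := (R / ((n : ℝ) - 1)) * nA2
      - 2 * (∑ i, ∑ j, ∑ k, ∑ l, W i j k l * A i k * A j l)
      + ((n : ℝ) / ((n : ℝ) - 2)) * (∑ i, ∑ j, ∑ k, A i j * A j k * A k i)
    E ≥ (R / ((n : ℝ) - 1)
          - 2 * Real.sqrt (((n : ℝ) - 2) / (2 * ((n : ℝ) - 1))) *
              Real.sqrt ((∑ i, ∑ j, ∑ k, ∑ l, (W i j k l) ^ 2)
                + ((n : ℝ) / (2 * ((n : ℝ) - 2))) * nA2)) * nA2
      ∧ 0 ≤ E ∧ (E = 0 → ∀ i j, A i j = 0) := by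
  have hn3 : (3:ℝ) ≤ (n:ℝ) := by exact_mod_cast hn
  have hn1p : (0:ℝ) < (n:ℝ) - 1 := by linarith
  have hn2p : (0:ℝ) < (n:ℝ) - 2 := by linarith
  intro nA2 E
  have hs2nn : 0 ≤ nA2 := by
    apply Finset.sum_nonneg; intro i _; apply Finset.sum_nonneg; intro j _; positivity
  have hSWnn : 0 ≤ ∑ i, ∑ j, ∑ k, ∑ l, (W i j k l)^2 := by
    apply Finset.sum_nonneg; intro i _; apply Finset.sum_nonneg; intro j _
    apply Finset.sum_nonneg; intro k _; apply Finset.sum_nonneg; intro l _; positivity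
  have hSnn : 0 ≤ (∑ i, ∑ j, ∑ k, ∑ l, (W i j k l)^2) + ((n:ℝ)/(2*((n:ℝ)-2))) * nA2 := by
    have h1 : (0:ℝ) ≤ ((n:ℝ)/(2*((n:ℝ)-2))) * nA2 := by positivity
    linarith
  have hknn : (0:ℝ) ≤ ((n:ℝ)-2)/(2*((n:ℝ)-1)) := by positivity
  have hkey : (-(∑ i, ∑ j, ∑ k, ∑ l, W i j k l * A i k * A j l)
      + ((n:ℝ)/(2*((n:ℝ)-2))) * (∑ i, ∑ j, ∑ k, A i j * A j k * A k i))^2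
      ≤ (((n:ℝ)-2)/(2*((n:ℝ)-1))) * nA2^2 *
        ((∑ i, ∑ j, ∑ k, ∑ l, (W i j k l)^2) + ((n:ℝ)/(2*((n:ℝ)-2))) * nA2) :=
    key A W hn3 htr hsym hW1 hW2 hW3 hTrW
  have hstrict : 4 * ((((n:ℝ)-2)/(2*((n:ℝ)-1))) *
      ((∑ i, ∑ j, ∑ k, ∑ l, (W i j k l)^2) + ((n:ℝ)/(2*((n:ℝ)-2))) * nA2))
      < (R / ((n:ℝ)-1))^2 := by
    have hkpos : (0:ℝ) < ((n:ℝ)-2)/(2*((n:ℝ)-1)) := by positivity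
    have h1 : 4 * ((((n:ℝ)-2)/(2*((n:ℝ)-1))) *
        ((∑ i, ∑ j, ∑ k, ∑ l, (W i j k l)^2) + ((n:ℝ)/(2*((n:ℝ)-2))) * nA2))
        < 4 * ((((n:ℝ)-2)/(2*((n:ℝ)-1))) * (R^2/(2*((n:ℝ)-1)*((n:ℝ)-2)))) := by
      have := mul_lt_mul_of_pos_left hpinch hkpos
      linarith
    have heq : 4 * ((((n:ℝ)-2)/(2*((n:ℝ)-1))) * (R^2/(2*((n:ℝ)-1)*((n:ℝ)-2))))
        = (R/((n:ℝ)-1))^2 := by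
      field_simp
      ring
    linarith
  obtain ⟨g1, g2, g3⟩ := assemble (R / ((n:ℝ)-1)) (((n:ℝ)-2)/(2*((n:ℝ)-1)))
    ((∑ i, ∑ j, ∑ k, ∑ l, (W i j k l)^2) + ((n:ℝ)/(2*((n:ℝ)-2))) * nA2)
    (-(∑ i, ∑ j, ∑ k, ∑ l, W i j k l * A i k * A j l)
      + ((n:ℝ)/(2*((n:ℝ)-2))) * (∑ i, ∑ j, ∑ k, A i j * A j k * A k i))
    nA2 (by positivity) hknn hSnn hs2nn hkey hstrict
  have hEeq : E = (R / ((n:ℝ)-1)) * nA2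
      + 2 * (-(∑ i, ∑ j, ∑ k, ∑ l, W i j k l * A i k * A j l)
        + ((n:ℝ)/(2*((n:ℝ)-2))) * (∑ i, ∑ j, ∑ k, A i j * A j k * A k i)) := by
    show (R / ((n : ℝ) - 1)) * nA2
      - 2 * (∑ i, ∑ j, ∑ k, ∑ l, W i j k l * A i k * A j l)
      + ((n : ℝ) / ((n : ℝ) - 2)) * (∑ i, ∑ j, ∑ k, A i j * A j k * A k i) = _
    field_simp
    ring
  refine ⟨?_, ?_, ?_⟩
  · rw [hEeq]; exact g1
  · rw [hEeq]; exact g2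
  · intro hE0 i j
    rw [hEeq] at hE0
    have hs0 : nA2 = 0 := g3 hE0
    have hrow : ∀ i ∈ Finset.univ, (∑ j, (A i j)^2) = 0 := by
      rw [← Finset.sum_eq_zero_iff_of_nonneg]
      · exact hs0
      · intro i _; apply Finset.sum_nonneg; intro j _; positivity
    have hentry : ∀ j' ∈ Finset.univ, (A i j')^2 = 0 := by
      rw [← Finset.sum_eq_zero_iff_of_nonneg]
      · exact hrow i (Finset.mem_univ i)
      · intro j' _; positivity
    exact pow_eq_zero_iff (two_ne_zero) |>.mp (hentry j (Finset.mem_univ j))
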